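/- If (M_0, …, M_d) is an interior point of the moment space 𝓜_{d+1} for the system (1, x, …, x^d) on [a,b], then for every x* ∈ [a,b] there exists a finitely supported representation of (M_0, …, M_d) whose support contains x*. -/

import Mathlib

open MeasureTheory

/-- Padding lemma: a sum over `Fin N` of a dite that vanishes beyond `c ≤ N`
equals the sum over `Fin c`. -/
lemma sum_dite_pad {M : Type*} [AddCommMonoid M] {c N : ℕ} (hcN : c ≤ N) (F : Fin c → M) :
    (∑ i : Fin N, if h : (i : ℕ) < c then F ⟨i, h⟩ else 0) = ∑ j : Fin c, F j := by
  set G : ℕ → M := fun i => if h : i < c then F ⟨i, h⟩ else 0 with hG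
  calc (∑ i : Fin N, if h : (i : ℕ) < c then F ⟨i, h⟩ else 0)
      = ∑ i ∈ Finset.range N, G i := Fin.sum_univ_eq_sum_range G N
    _ = ∑ i ∈ Finset.range c, G i := by
        refine (Finset.sum_subset (Finset.range_subset_range.mpr hcN) ?_).symm
        intro i _ hi
        simp only [Finset.mem_range, not_lt] at hi
        simp [G, Nat.not_lt.mpr hi]
    _ = ∑ j : Fin c, G j := (Fin.sum_univ_eq_sum_range G c).symm
    _ = ∑ j : Fin c, F j := by
        refine Finset.sum_congr rfl fun j _ => ?_
        simp [G, j.isLt]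

/-- In `ℝⁿ`, the convex hull of a compact set is compact. -/
lemma isCompact_convexHull_pi {n : ℕ} {K : Set (Fin n → ℝ)} (hK : IsCompact K) :
    IsCompact (convexHull ℝ K) := by
  rcases K.eq_empty_or_nonempty with rfl | ⟨x₀, hx₀⟩
  · simp
  classical
  set N := n + 1 with hN
  set Φ : (Fin N → ℝ) × (Fin N → (Fin n → ℝ)) → (Fin n → ℝ) :=
    fun p => ∑ i, p.1 i • p.2 i with hΦ
  have hcont : Continuous Φ := by
    apply continuous_finset_sum
    intro i _
    exact ((continuous_apply i).comp continuous_fst).smul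
      ((continuous_apply i).comp continuous_snd)
  have hTcomp : IsCompact ((stdSimplex ℝ (Fin N)) ×ˢ (Set.univ.pi fun _ : Fin N => K)) :=
    IsCompact.prod (isCompact_stdSimplex ..) (isCompact_univ_pi fun _ => hK)
  have himg : Φ '' ((stdSimplex ℝ (Fin N)) ×ˢ (Set.univ.pi fun _ : Fin N => K))
      = convexHull ℝ K := by
    apply Set.Subset.antisymm
    · rintro _ ⟨⟨w, z⟩, ⟨hw, hz⟩, rfl⟩
      exact (convex_convexHull ℝ K).sum_mem (fun i _ => hw.1 i) hw.2
        (fun i _ => subset_convexHull ℝ K (hz i (Set.mem_univ i)))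
    · intro x hx
      obtain ⟨ι, hι, z, w, hzK, hAI, hw0, hw1, hsum⟩ :=
        eq_pos_convex_span_of_mem_convexHull hx
      have hcard : Fintype.card ι ≤ N := by
        have h1 := hAI.card_le_finrank_succ
        have h2 : Module.finrank ℝ (vectorSpan ℝ (Set.range z)) ≤ n :=
          le_trans (Submodule.finrank_le _) (by simp [Module.finrank_pi])
        omega
      set c := Fintype.card ι with hc
      set e := Fintype.equivFin ι with he
      set w' : Fin N → ℝ := fun i => if h : (i : ℕ) < c then w (e.symm ⟨i, h⟩) else 0 with hw'
      set z' : Fin N → (Fin n → ℝ) :=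
        fun i => if h : (i : ℕ) < c then z (e.symm ⟨i, h⟩) else x₀ with hz'
      refine ⟨(w', z'), ⟨⟨fun i => ?_, ?_⟩, fun i _ => ?_⟩, ?_⟩
      · dsimp [w']
        split
        · exact (hw0 _).le
        · exact le_rfl
      · calc ∑ i, w' i
            = ∑ i : Fin N, if h : (i : ℕ) < c then w (e.symm ⟨i, h⟩) else 0 := rfl
          _ = ∑ j : Fin c, w (e.symm j) := sum_dite_pad hcard (fun j => w (e.symm j))
          _ = ∑ i, w i := Equiv.sum_comp e.symm w
          _ = 1 := hw1
      · dsimp [z']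
        split
        · exact hzK (Set.mem_range_self _)
        · exact hx₀
      · dsimp only [Φ]
        have h1 : ∀ i : Fin N, w' i • z' i =
            (if h : (i : ℕ) < c then w (e.symm ⟨i, h⟩) • z (e.symm ⟨i, h⟩)
            else 0) := by
          intro i
          dsimp [w', z']
          split <;> simp
        calc ∑ i : Fin N, w' i • z' i
            = ∑ i : Fin N, if h : (i : ℕ) < c then w (e.symm ⟨i, h⟩) • z (e.symm ⟨i, h⟩)
              else 0 := Finset.sum_congr rfl (fun i _ => h1 i)
          _ = ∑ j : Fin c, w (e.symm j) • z (e.symm j) :=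
              sum_dite_pad hcard (fun j => w (e.symm j) • z (e.symm j))
          _ = ∑ i, w i • z i := Equiv.sum_comp e.symm (fun i => w i • z i)
          _ = x := hsum
  rw [← himg]
  exact hTcomp.image hcont

/-- If `(M₀, …, M_d)` is an interior point of the moment space `𝓜_{d+1}` for the
system `(1, x, …, x^d)` on `[a,b]`, then for every `x* ∈ [a,b]` there is a finitely
supported representation of `(M₀, …, M_d)` whose support contains `x*`. -/
theorem stmt19 (a b : ℝ) (hab : a < b) (d : ℕ) (M : ℕ → ℝ)
    (hint : (fun m : Fin (d + 1) => M (m : ℕ)) ∈ interior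
      {v : Fin (d + 1) → ℝ | ∃ σ : Measure ℝ, IsFiniteMeasure σ ∧
        σ (Set.Icc a b)ᶜ = 0 ∧ ∀ m : Fin (d + 1), (∫ x, x ^ (m : ℕ) ∂σ) = v m}) :
    ∀ xs ∈ Set.Icc a b, ∃ (s : Finset ℝ) (f : ℝ → ℝ),
      (↑s : Set ℝ) ⊆ Set.Icc a b ∧ (∀ x ∈ s, 0 < f x) ∧
      (∀ m ≤ d, ∑ x ∈ s, f x * x ^ m = M m) ∧ xs ∈ s := by
  classical
  intro xs hxs
  set S : Set (Fin (d + 1) → ℝ) :=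
    {v : Fin (d + 1) → ℝ | ∃ σ : Measure ℝ, IsFiniteMeasure σ ∧
      σ (Set.Icc a b)ᶜ = 0 ∧ ∀ m : Fin (d + 1), (∫ x, x ^ (m : ℕ) ∂σ) = v m} with hS
  -- ball around the interior point
  obtain ⟨r, hr0, hball⟩ := Metric.mem_nhds_iff.mp (mem_interior_iff_mem_nhds.mp hint)
  -- uniform bound on monomials on [a, b]
  set R : ℝ := max 1 (max |a| |b|) with hR
  have hR1 : (1 : ℝ) ≤ R := le_max_left _ _
  set C : ℝ := R ^ d with hC
  have hC1 : (1 : ℝ) ≤ C := one_le_pow₀ hR1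
  have hC0 : (0 : ℝ) < C := lt_of_lt_of_le one_pos hC1
  have habs : ∀ x ∈ Set.Icc a b, ∀ m : ℕ, m ≤ d → |x ^ m| ≤ C := by
    intro x hx m hm
    have hxR : |x| ≤ R := by
      refine le_trans (abs_le.mpr ⟨?_, ?_⟩) (le_max_right _ _)
      · exact le_trans (neg_le_neg (le_max_left |a| |b|)) (le_trans (neg_abs_le a) hx.1)
      · exact le_trans hx.2 (le_trans (le_abs_self b) (le_max_right _ _))
    calc |x ^ m| = |x| ^ m := abs_pow x m
      _ ≤ R ^ m := pow_le_pow_left₀ (abs_nonneg x) hxR m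
      _ ≤ R ^ d := pow_le_pow_right₀ hR1 hm
  -- choice of ε
  set ε : ℝ := r / (2 * C) with hε
  have hε0 : 0 < ε := div_pos hr0 (by linarith)
  -- the perturbed moment vector
  set v' : Fin (d + 1) → ℝ := fun m => M (m : ℕ) - ε * xs ^ (m : ℕ) with hv'
  have hv'S : v' ∈ S := by
    apply hball
    have hle : dist v' (fun m : Fin (d + 1) => M (m : ℕ)) ≤ r / 2 := by
      refine dist_pi_le_iff (by linarith) |>.mpr fun m => ?_
      have hmle : (m : ℕ) ≤ d := Nat.lt_succ_iff.mp m.isLt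
      have : |xs ^ (m : ℕ)| ≤ C := habs xs hxs _ hmle
      rw [Real.dist_eq]
      have : |M (m : ℕ) - ε * xs ^ (m : ℕ) - M (m : ℕ)| = ε * |xs ^ (m : ℕ)| := by
        rw [sub_sub_cancel_left, abs_neg, abs_mul, abs_of_pos hε0]
      rw [this]
      calc ε * |xs ^ (m : ℕ)| ≤ ε * C := by
            exact mul_le_mul_of_nonneg_left (habs xs hxs _ hmle) hε0.le
        _ = r / 2 := by
            rw [hε]
            field_simp
    exact Metric.mem_ball.mpr (lt_of_le_of_lt hle (by linarith))
  obtain ⟨σ, hσfin, hσc, hσmom⟩ := hv'S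
  haveI := hσfin
  by_cases hσ0 : σ Set.univ = 0
  · -- σ is the zero measure; the point mass at xs represents M
    have hσz : σ = 0 := Measure.measure_univ_eq_zero.mp hσ0
    refine ⟨{xs}, fun _ => ε, ?_, ?_, ?_, Finset.mem_singleton_self xs⟩
    · simpa using hxs
    · intro x _; exact hε0
    · intro m hm
      have := hσmom ⟨m, Nat.lt_succ_of_le hm⟩
      rw [hσz] at this
      simp only [integral_zero_measure] at this
      simp only [Finset.sum_singleton]
      have hMm : M m = ε * xs ^ m := by
        have h0 : (0 : ℝ) = M m - ε * xs ^ m := this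
        linarith
      rw [hMm]
  · -- σ is nonzero; use Jensen + Carathéodory
    haveI : NeZero σ := ⟨fun h => hσ0 (by simp [h])⟩
    set V : ℝ → (Fin (d + 1) → ℝ) := fun x m => x ^ (m : ℕ) with hV
    have hVcont : Continuous V := continuous_pi fun m => continuous_pow _
    have hae : ∀ᵐ x ∂σ, x ∈ Set.Icc a b := by
      have hcompl : {x : ℝ | ¬ x ∈ Set.Icc a b} = (Set.Icc a b)ᶜ := rfl
      rw [ae_iff, hcompl]
      exact hσc
    have hVint : Integrable V σ := by
      refine (integrable_const C).mono' (hVcont.aestronglyMeasurable) ?_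
      filter_upwards [hae] with x hx
      refine pi_norm_le_iff_of_nonneg hC0.le |>.mpr fun m => ?_
      have := habs x hx (m : ℕ) (Nat.lt_succ_iff.mp m.isLt)
      simpa [V, Real.norm_eq_abs, abs_pow] using this
    have hIV : ∫ x, V x ∂σ = v' := by
      funext m
      have hproj := (ContinuousLinearMap.proj (R := ℝ)
        (φ := fun _ : Fin (d + 1) => ℝ) m).integral_comp_comm hVint
      simp only [ContinuousLinearMap.proj_apply] at hproj
      rw [← hproj]
      exact hσmom m
    set K : Set (Fin (d + 1) → ℝ) := V '' Set.Icc a b with hK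
    have hKclosed : IsClosed (convexHull ℝ K) :=
      (isCompact_convexHull_pi (isCompact_Icc.image hVcont)).isClosed
    have havg : (⨍ x, V x ∂σ) ∈ convexHull ℝ K := by
      refine (convex_convexHull ℝ K).average_mem hKclosed ?_ hVint
      filter_upwards [hae] with x hx
      exact subset_convexHull ℝ K (Set.mem_image_of_mem V hx)
    set c : ℝ := (σ Set.univ).toReal with hc
    have hcpos : 0 < c := ENNReal.toReal_pos hσ0 (measure_ne_top σ _)
    have havg' : c⁻¹ • v' ∈ convexHull ℝ K := by
      have := average_eq (μ := σ) V
      rw [hIV] at this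
      rw [show c = σ.real Set.univ from rfl, ← this]
      exact havg
    obtain ⟨ι, hι, z, w, hzK, _, hw0, hw1, hsum⟩ :=
      eq_pos_convex_span_of_mem_convexHull havg'
    have hv'eq : v' = ∑ i, (c * w i) • z i := by
      have : c • (c⁻¹ • v') = c • ∑ i, w i • z i := by rw [hsum]
      rw [smul_smul, mul_inv_cancel₀ (ne_of_gt hcpos), one_smul, Finset.smul_sum] at this
      simpa [smul_smul] using this
    -- choose preimages in [a, b]
    have hzim : ∀ i, z i ∈ V '' Set.Icc a b := fun i => hzK (Set.mem_range_self i)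
    choose p hpIcc hpV using fun i => hzim i
    -- the finite support and the weights
    set T : Finset ℝ := Finset.univ.image p with hT
    set s : Finset ℝ := insert xs T with hs
    set f : ℝ → ℝ := fun x =>
      (if x = xs then ε else 0) + ∑ i ∈ Finset.univ.filter (fun i => p i = x), c * w i with hf
    have hsum_nonneg : ∀ x : ℝ, 0 ≤ ∑ i ∈ Finset.univ.filter (fun i => p i = x), c * w i :=
      fun x => Finset.sum_nonneg fun i _ => mul_nonneg hcpos.le (hw0 i).le
    refine ⟨s, f, ?_, ?_, ?_, Finset.mem_insert_self xs T⟩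
    · -- support in [a, b]
      intro x hx
      rcases Finset.mem_insert.mp hx with rfl | hxT
      · exact hxs
      · obtain ⟨i, _, rfl⟩ := Finset.mem_image.mp hxT
        exact hpIcc i
    · -- positivity
      intro x hx
      rcases Finset.mem_insert.mp hx with rfl | hxT
      · have : f x = ε + ∑ i ∈ Finset.univ.filter (fun i => p i = x), c * w i := by
          simp [hf]
        rw [this]
        exact lt_of_lt_of_le hε0 (le_add_of_nonneg_right (hsum_nonneg x))
      · obtain ⟨i₀, _, hpi₀⟩ := Finset.mem_image.mp hxT
        have hterm : c * w i₀ ≤ ∑ i ∈ Finset.univ.filter (fun i => p i = x), c * w i := by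
          refine Finset.single_le_sum (fun i _ => mul_nonneg hcpos.le (hw0 i).le) ?_
          simp [hpi₀]
        have hpos : 0 < ∑ i ∈ Finset.univ.filter (fun i => p i = x), c * w i :=
          lt_of_lt_of_le (mul_pos hcpos (hw0 i₀)) hterm
        have : 0 ≤ (if x = xs then ε else 0 : ℝ) := by split <;> [exact hε0.le; exact le_rfl]
        dsimp [f]
        linarith
    · -- moments
      intro m hm
      set mm : Fin (d + 1) := ⟨m, Nat.lt_succ_of_le hm⟩ with hmm
      -- coordinate equation from hv'eq
      have hcoord : M m - ε * xs ^ m = ∑ i, c * w i * (p i) ^ m := by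
        have h0 := congrFun hv'eq mm
        have h1 : v' mm = M m - ε * xs ^ m := rfl
        rw [h1, Finset.sum_apply] at h0
        rw [h0]
        refine Finset.sum_congr rfl fun i _ => ?_
        have hz : z i mm = (p i) ^ m := by rw [← hpV i]
        simp only [Pi.smul_apply, smul_eq_mul, hz]
      have hsplit : ∑ x ∈ s, f x * x ^ m
          = ∑ x ∈ s, (if x = xs then ε else 0) * x ^ m
            + ∑ x ∈ s, (∑ i ∈ Finset.univ.filter (fun i => p i = x), c * w i) * x ^ m := by
        rw [← Finset.sum_add_distrib]
        refine Finset.sum_congr rfl fun x _ => ?_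
        dsimp [f]
        ring
      have hfirst : ∑ x ∈ s, (if x = xs then ε else 0) * x ^ m = ε * xs ^ m := by
        have : ∀ x ∈ s, (if x = xs then ε else 0) * x ^ m
            = if x = xs then ε * x ^ m else 0 := by
          intro x _
          split <;> simp
        rw [Finset.sum_congr rfl this, Finset.sum_ite_eq' s xs (fun x => ε * x ^ m),
          if_pos (Finset.mem_insert_self xs T)]
      have hsecond : ∑ x ∈ s, (∑ i ∈ Finset.univ.filter (fun i => p i = x), c * w i) * x ^ m
          = ∑ i, c * w i * (p i) ^ m := by
        have hstep : ∀ x ∈ s, (∑ i ∈ Finset.univ.filter (fun i => p i = x), c * w i) * x ^ m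
            = ∑ i ∈ Finset.univ.filter (fun i => p i = x), c * w i * (p i) ^ m := by
          intro x _
          rw [Finset.sum_mul]
          refine Finset.sum_congr rfl fun i hi => ?_
          rw [(Finset.mem_filter.mp hi).2]
        rw [Finset.sum_congr rfl hstep]
        exact Finset.sum_fiberwise_of_maps_to
          (fun i _ => Finset.mem_insert_of_mem (Finset.mem_image_of_mem p (Finset.mem_univ i)))
          (fun i => c * w i * (p i) ^ m)
      rw [hsplit, hfirst, hsecond, ← hcoord]
      ring
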